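/- Let A and B be finite sets of positive reals with |A| ≥ |B| ≥ 2. Then |A|²|B|² / |AB| ≤ 4·⌈log₂|B|⌉·|A+A|·|B+B|. -/

import Mathlib

open Finset Pointwise

namespace Solymosi

variable (A B : Finset ℝ)

noncomputable def Bl (l : ℝ) : Finset ℝ := B.filter fun b => l * b ∈ A

noncomputable def dd (l : ℝ) : ℕ := (Bl A B l).card

noncomputable def Pt (l : ℝ) : Finset (ℝ × ℝ) := (Bl A B l).image fun b => (b, l * b)

noncomputable def Lam : Finset ℝ := (A ×ˢ B).image fun p => p.1 / p.2

noncomputable def Rg (θ : ℝ) : Finset (ℝ × ℝ) :=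
  ((B + B) ×ˢ (A + A)).filter fun p => p.2 < θ * p.1

noncomputable def prd (T : Finset ℝ) (l : ℝ) : ℝ :=
  if h : (T.filter fun m => m < l).Nonempty then (T.filter fun m => m < l).max' h else 0

noncomputable def Pcons (T : Finset ℝ) : ℕ :=
  ∑ l ∈ T.filter (fun l => (T.filter fun m => m < l).Nonempty),
    dd A B (prd T l) * dd A B l

lemma mem_Pt {l : ℝ} {p : ℝ × ℝ} :
    p ∈ Pt A B l ↔ ∃ b, (b ∈ B ∧ l * b ∈ A) ∧ p = (b, l * b) := by
  simp [Pt, Bl, Finset.mem_image, Finset.mem_filter, eq_comm]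

lemma card_Pt (l : ℝ) : (Pt A B l).card = dd A B l := by
  rw [Pt, dd, Finset.card_image_of_injective]
  intro x y h
  exact congrArg Prod.fst h

lemma mem_Pt_add {hBpos : ∀ b ∈ B, 0 < b} {l m : ℝ} (hlm : l < m) {p : ℝ × ℝ}
    (hp : p ∈ Pt A B l + Pt A B m) :
    p ∈ (B + B) ×ˢ (A + A) ∧ l * p.1 < p.2 ∧ p.2 < m * p.1 ∧ 0 < p.1 := by
  rcases Finset.mem_add.1 hp with ⟨y, hy, z, hz, rfl⟩
  rcases (mem_Pt A B).1 hy with ⟨b, ⟨hbB, hbA⟩, rfl⟩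
  rcases (mem_Pt A B).1 hz with ⟨c, ⟨hcB, hcA⟩, rfl⟩
  have hb : 0 < b := hBpos b hbB
  have hc : 0 < c := hBpos c hcB
  refine ⟨Finset.mem_product.2 ⟨Finset.add_mem_add hbB hcB, Finset.add_mem_add hbA hcA⟩, ?_, ?_, ?_⟩
  · simp only [Prod.fst_add, Prod.snd_add]
    nlinarith
  · simp only [Prod.fst_add, Prod.snd_add]
    nlinarith
  · simp only [Prod.fst_add]
    positivity

lemma card_Pt_add {l m : ℝ} (h : l ≠ m) :
    (Pt A B l + Pt A B m).card = dd A B l * dd A B m := by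
  rw [← card_Pt A B l, ← card_Pt A B m, ← Finset.card_product]
  symm
  apply Finset.card_bij (fun (p : (ℝ×ℝ)×(ℝ×ℝ)) _ => p.1 + p.2)
  · intro a ha
    rw [Finset.mem_product] at ha
    exact Finset.add_mem_add ha.1 ha.2
  · rintro ⟨p1, p2⟩ hp ⟨q1, q2⟩ hq hpq
    rw [Finset.mem_product] at hp hq
    rcases (mem_Pt A B).1 hp.1 with ⟨b, ⟨hbB, hbA⟩, hb⟩
    rcases (mem_Pt A B).1 hp.2 with ⟨c, ⟨hcB, hcA⟩, hc⟩
    rcases (mem_Pt A B).1 hq.1 with ⟨b', ⟨hbB', hbA'⟩, hb'⟩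
    rcases (mem_Pt A B).1 hq.2 with ⟨c', ⟨hcB', hcA'⟩, hc'⟩
    simp only at hb hc hb' hc'
    subst hb hc hb' hc'
    have h1 : b + c = b' + c' := congrArg Prod.fst hpq
    have h2 : l * b + m * c = l * b' + m * c' := congrArg Prod.snd hpq
    have hcc : c = c' := by
      have hml : m - l ≠ 0 := sub_ne_zero.2 (Ne.symm h)
      have : (m - l) * c = (m - l) * c' := by linear_combination h2 - l * h1
      exact mul_left_cancel₀ hml this
    have hbb : b = b' := by linarith
    simp [hbb, hcc]
  · intro x hx
    rcases Finset.mem_add.1 hx with ⟨y, hy, z, hz, rfl⟩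
    exact ⟨(y, z), Finset.mem_product.2 ⟨hy, hz⟩, rfl⟩

lemma card_Rg_le (θ : ℝ) : (Rg A B θ).card ≤ (A + A).card * (B + B).card := by
  calc (Rg A B θ).card ≤ ((B + B) ×ˢ (A + A)).card := Finset.card_filter_le _ _
    _ = (B + B).card * (A + A).card := Finset.card_product _ _
    _ = (A + A).card * (B + B).card := Nat.mul_comm _ _


lemma prd_mem {T : Finset ℝ} {l : ℝ} (h : (T.filter fun m => m < l).Nonempty) :
    prd T l ∈ T ∧ prd T l < l := by
  rw [prd, dif_pos h]
  have := Finset.max'_mem _ h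
  rw [Finset.mem_filter] at this
  exact this

lemma pcons_le_aux (hBpos : ∀ b ∈ B, 0 < b) :
    ∀ N : ℕ, ∀ T : Finset ℝ, T.card ≤ N → ∀ hT : T.Nonempty,
      Pcons A B T ≤ (Rg A B (T.max' hT)).card := by
  intro N
  induction N with
  | zero =>
    intro T hc hT
    rw [Nat.le_zero, Finset.card_eq_zero] at hc
    subst hc
    exact absurd hT (by simp)
  | succ N ih =>
    intro T hc hT
    set M := T.max' hT with hMdef
    have hM : M ∈ T := T.max'_mem hT
    by_cases h1 : (T.erase M).Nonempty
    · set T' := T.erase M with hT'def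
      have hcard : T'.card ≤ N := by
        rw [hT'def, Finset.card_erase_of_mem hM]
        omega
      have ih' := ih T' hcard h1
      set m' := T'.max' h1 with hm'def
      have hm'T' : m' ∈ T' := T'.max'_mem h1
      have hm'T : m' ∈ T := Finset.mem_of_mem_erase hm'T'
      have hm'M : m' < M :=
        lt_of_le_of_ne (Finset.le_max' T m' hm'T) (Finset.ne_of_mem_erase hm'T')
      -- filters agree away from M
      have hfilts : ∀ l ∈ T', T.filter (fun m => m < l) = T'.filter (fun m => m < l) := by
        intro l hl
        have hlT : l ∈ T := Finset.mem_of_mem_erase hl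
        have hlM : l ≤ M := Finset.le_max' T l hlT
        ext μ
        simp only [Finset.mem_filter, hT'def, Finset.mem_erase]
        constructor
        · rintro ⟨h1', h2'⟩
          exact ⟨⟨fun e => absurd (e ▸ h2') (not_lt.2 hlM), h1'⟩, h2'⟩
        · rintro ⟨⟨_, h1'⟩, h2'⟩
          exact ⟨h1', h2'⟩
      have hfM : T.filter (fun m => m < M) = T' := by
        ext μ
        simp only [Finset.mem_filter, hT'def, Finset.mem_erase]
        constructor
        · rintro ⟨h1', h2'⟩
          exact ⟨ne_of_lt h2', h1'⟩
        · rintro ⟨h1', h2'⟩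
          exact ⟨h2', lt_of_le_of_ne (Finset.le_max' _ _ h2') h1'⟩
      have hprdM : prd T M = m' := by
        rw [prd, hfM, dif_pos h1]
      -- split the Pcons sum
      have hSP : T.filter (fun l => (T.filter fun m => m < l).Nonempty)
          = insert M (T'.filter (fun l => (T'.filter fun m => m < l).Nonempty)) := by
        ext l
        simp only [Finset.mem_filter, Finset.mem_insert]
        constructor
        · rintro ⟨hlT, hne⟩
          by_cases hlM : l = M
          · exact Or.inl hlM
          · have hlT' : l ∈ T' := Finset.mem_erase.2 ⟨hlM, hlT⟩
            exact Or.inr ⟨hlT', by rwa [← hfilts l hlT']⟩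
        · rintro (rfl | ⟨hlT', hne⟩)
          · exact ⟨hM, hfM ▸ h1⟩
          · exact ⟨Finset.mem_of_mem_erase hlT', by rwa [hfilts l hlT']⟩
      have hMnot : M ∉ T'.filter (fun l => (T'.filter fun m => m < l).Nonempty) := by
        intro hcon
        exact Finset.notMem_erase M T (Finset.mem_filter.1 hcon).1
      have hPc : Pcons A B T = dd A B m' * dd A B M + Pcons A B T' := by
        rw [Pcons, hSP, Finset.sum_insert hMnot, hprdM, Pcons]
        congr 1
        apply Finset.sum_congr rfl
        intro l hl
        have hlT' : l ∈ T' := (Finset.mem_filter.1 hl).1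
        rw [prd, prd, hfilts l hlT']
      -- geometry
      have hBBpos : ∀ x ∈ B + B, 0 < x := by
        intro x hx
        rcases Finset.mem_add.1 hx with ⟨y, hy, z, hz, rfl⟩
        exact add_pos (hBpos y hy) (hBpos z hz)
      have hsub1 : Rg A B m' ⊆ Rg A B M := by
        intro p hp
        rw [Rg, Finset.mem_filter] at hp ⊢
        refine ⟨hp.1, hp.2.trans ?_⟩
        have hp1 : 0 < p.1 := hBBpos p.1 (Finset.mem_product.1 hp.1).1
        exact mul_lt_mul_of_pos_right hm'M hp1
      have hsub2 : Pt A B m' + Pt A B M ⊆ Rg A B M := by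
        intro p hp
        obtain ⟨hmem, _, hlt, _⟩ := mem_Pt_add A B (hBpos := hBpos) hm'M hp
        rw [Rg, Finset.mem_filter]
        exact ⟨hmem, hlt⟩
      have hdisj : Disjoint (Rg A B m') (Pt A B m' + Pt A B M) := by
        rw [Finset.disjoint_left]
        intro p hp hp2
        obtain ⟨_, hgt, _, _⟩ := mem_Pt_add A B (hBpos := hBpos) hm'M hp2
        rw [Rg, Finset.mem_filter] at hp
        linarith [hp.2]
      calc Pcons A B T = dd A B m' * dd A B M + Pcons A B T' := hPc
        _ ≤ (Pt A B m' + Pt A B M).card + (Rg A B m').card := by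
            rw [card_Pt_add A B hm'M.ne]
            exact Nat.add_le_add_left ih' _
        _ = ((Pt A B m' + Pt A B M) ∪ Rg A B m').card := by
            rw [Finset.card_union_of_disjoint hdisj.symm]
        _ ≤ (Rg A B M).card := Finset.card_le_card (Finset.union_subset hsub2 hsub1)
    · -- T = {M}
      have hzero : Pcons A B T = 0 := by
        rw [Pcons]
        apply Finset.sum_eq_zero
        intro l hl
        exfalso
        obtain ⟨hlT, μ, hμ⟩ := Finset.mem_filter.1 hl
        obtain ⟨hμT, hμl⟩ := Finset.mem_filter.1 hμ
        have hlM : l ≤ M := Finset.le_max' T l hlT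
        have : μ ∈ T.erase M := Finset.mem_erase.2 ⟨ne_of_lt (lt_of_lt_of_le hμl hlM), hμT⟩
        exact h1 ⟨μ, this⟩
      simp [hzero]

lemma pcons_le (hBpos : ∀ b ∈ B, 0 < b) (T : Finset ℝ) :
    Pcons A B T ≤ (A + A).card * (B + B).card := by
  rcases T.eq_empty_or_nonempty with rfl | hT
  · simp [Pcons]
  · exact (pcons_le_aux A B hBpos T.card T le_rfl hT).trans (card_Rg_le A B _)


noncomputable def rr (x : ℝ) : ℕ := ((A ×ˢ B).filter fun p => p.1 * p.2 = x).card

noncomputable def Ebig : ℕ := ∑ l ∈ Lam A B, dd A B l ^ 2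

lemma dd_le (l : ℝ) : dd A B l ≤ B.card := Finset.card_filter_le _ _

lemma dd_pos (hBpos : ∀ b ∈ B, 0 < b) {l : ℝ} (hl : l ∈ Lam A B) : 0 < dd A B l := by
  rw [Lam, Finset.mem_image] at hl
  obtain ⟨p, hp, rfl⟩ := hl
  obtain ⟨ha, hb⟩ := Finset.mem_product.1 hp
  have hmem : p.2 ∈ Bl A B (p.1 / p.2) := Finset.mem_filter.2
    ⟨hb, by rw [div_mul_cancel₀ _ (ne_of_gt (hBpos _ hb))]; exact ha⟩
  exact Finset.card_pos.2 ⟨p.2, hmem⟩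

lemma sum_rr : ∑ x ∈ A * B, rr A B x = A.card * B.card := by
  have H : ∀ p ∈ A ×ˢ B, p.1 * p.2 ∈ A * B := fun p hp =>
    Finset.mul_mem_mul (Finset.mem_product.1 hp).1 (Finset.mem_product.1 hp).2
  rw [← Finset.card_product, Finset.card_eq_sum_card_fiberwise H]
  rfl

lemma fib_card (hBpos : ∀ b ∈ B, 0 < b) (l : ℝ) :
    ((A ×ˢ B).filter fun p => p.1 / p.2 = l).card = dd A B l := by
  rw [dd, Bl]
  apply Finset.card_bij (fun (p : ℝ × ℝ) _ => p.2)
  · intro p hp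
    obtain ⟨hmem, hdiv⟩ := Finset.mem_filter.1 hp
    obtain ⟨h1, h2⟩ := Finset.mem_product.1 hmem
    have hb : p.2 ≠ 0 := ne_of_gt (hBpos _ h2)
    refine Finset.mem_filter.2 ⟨h2, ?_⟩
    rw [← hdiv, div_mul_cancel₀ _ hb]
    exact h1
  · rintro ⟨a, b⟩ hp ⟨c, e⟩ hq hpq
    obtain ⟨hmem, hdiv⟩ := Finset.mem_filter.1 hp
    obtain ⟨hmem', hdiv'⟩ := Finset.mem_filter.1 hq
    have hb : b ≠ 0 := ne_of_gt (hBpos _ (Finset.mem_product.1 hmem).2)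
    have he : e ≠ 0 := ne_of_gt (hBpos _ (Finset.mem_product.1 hmem').2)
    simp only at hpq hdiv hdiv'
    subst hpq
    have : a = c := by
      have h1 : a = l * b := by field_simp at hdiv; linarith [hdiv]
      have h2 : c = l * b := by field_simp at hdiv'; linarith [hdiv']
      rw [h1, h2]
    simp [this]
  · intro b hb
    obtain ⟨hbB, hlb⟩ := Finset.mem_filter.1 hb
    have hbne : b ≠ 0 := ne_of_gt (hBpos _ hbB)
    refine ⟨(l * b, b), Finset.mem_filter.2 ⟨Finset.mem_product.2 ⟨hlb, hbB⟩, ?_⟩, rfl⟩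
    field_simp

lemma sum_dd (hBpos : ∀ b ∈ B, 0 < b) : ∑ l ∈ Lam A B, dd A B l = A.card * B.card := by
  have H : ∀ p ∈ A ×ˢ B, p.1 / p.2 ∈ Lam A B := fun p hp => Finset.mem_image_of_mem _ hp
  calc ∑ l ∈ Lam A B, dd A B l
      = ∑ l ∈ Lam A B, ((A ×ˢ B).filter fun p => p.1 / p.2 = l).card :=
        Finset.sum_congr rfl fun l _ => (fib_card A B hBpos l).symm
    _ = (A ×ˢ B).card := (Finset.card_eq_sum_card_fiberwise H).symm
    _ = A.card * B.card := Finset.card_product _ _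

lemma energy_eq (hBpos : ∀ b ∈ B, 0 < b) :
    ∑ x ∈ A * B, rr A B x ^ 2 = Ebig A B := by
  classical
  set Q1 := ((A ×ˢ B) ×ˢ (A ×ˢ B)).filter
    (fun p => p.1.1 * p.1.2 = p.2.1 * p.2.2) with hQ1
  set Q2 := ((A ×ˢ B) ×ˢ (A ×ˢ B)).filter
    (fun p => p.1.1 * p.2.2 = p.2.1 * p.1.2) with hQ2
  have h1 : ∑ x ∈ A * B, rr A B x ^ 2 = Q1.card := by
    have H : ∀ p ∈ Q1, p.1.1 * p.1.2 ∈ A * B := by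
      intro p hp
      have := (Finset.mem_product.1 (Finset.mem_filter.1 hp).1).1
      exact Finset.mul_mem_mul (Finset.mem_product.1 this).1 (Finset.mem_product.1 this).2
    rw [Finset.card_eq_sum_card_fiberwise H]
    apply Finset.sum_congr rfl
    intro x _
    have hsplit : Q1.filter (fun p => p.1.1 * p.1.2 = x)
        = ((A ×ˢ B).filter fun p => p.1 * p.2 = x) ×ˢ
          ((A ×ˢ B).filter fun p => p.1 * p.2 = x) := by
      ext p
      simp only [hQ1, Finset.mem_filter, Finset.mem_product]
      constructor
      · rintro ⟨⟨⟨hp1, hp2⟩, heq⟩, hx⟩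
        exact ⟨⟨hp1, hx⟩, hp2, heq.symm.trans hx⟩
      · rintro ⟨⟨hp1, hx1⟩, hp2, hx2⟩
        exact ⟨⟨⟨hp1, hp2⟩, hx1.trans hx2.symm⟩, hx1⟩
    rw [sq, rr, ← Finset.card_product, hsplit]
  have h2 : Q2.card = Ebig A B := by
    have H : ∀ p ∈ Q2, p.1.1 / p.1.2 ∈ Lam A B := by
      intro p hp
      exact Finset.mem_image_of_mem _ (Finset.mem_product.1 (Finset.mem_filter.1 hp).1).1
    rw [Finset.card_eq_sum_card_fiberwise H, Ebig]
    apply Finset.sum_congr rfl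
    intro l _
    have hsplit : Q2.filter (fun p => p.1.1 / p.1.2 = l)
        = ((A ×ˢ B).filter fun p => p.1 / p.2 = l) ×ˢ
          ((A ×ˢ B).filter fun p => p.1 / p.2 = l) := by
      ext p
      simp only [hQ2, Finset.mem_filter, Finset.mem_product]
      constructor
      · rintro ⟨⟨⟨hp1, hp2⟩, heq⟩, hl⟩
        have hb : p.1.2 ≠ 0 := ne_of_gt (hBpos _ hp1.2)
        have he : p.2.2 ≠ 0 := ne_of_gt (hBpos _ hp2.2)
        refine ⟨⟨hp1, hl⟩, hp2, ?_⟩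
        rw [← hl]
        exact ((div_eq_div_iff he hb).2 heq.symm)
      · rintro ⟨⟨hp1, hl1⟩, hp2, hl2⟩
        have hb : p.1.2 ≠ 0 := ne_of_gt (hBpos _ hp1.2)
        have he : p.2.2 ≠ 0 := ne_of_gt (hBpos _ hp2.2)
        refine ⟨⟨⟨hp1, hp2⟩, ?_⟩, hl1⟩
        exact (div_eq_div_iff hb he).1 (hl1.trans hl2.symm)
    rw [hsplit, Finset.card_product, fib_card A B hBpos l, sq]
  have h12 : Q1.card = Q2.card := by
    apply Finset.card_bij'
      (i := fun (p : (ℝ × ℝ) × ℝ × ℝ) _ => ((p.1.1, p.2.2), (p.2.1, p.1.2)))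
      (j := fun (p : (ℝ × ℝ) × ℝ × ℝ) _ => ((p.1.1, p.2.2), (p.2.1, p.1.2)))
    · intro p hp
      obtain ⟨hmem, heq⟩ := Finset.mem_filter.1 hp
      obtain ⟨hp1, hp2⟩ := Finset.mem_product.1 hmem
      obtain ⟨h11, h12'⟩ := Finset.mem_product.1 hp1
      obtain ⟨h21, h22⟩ := Finset.mem_product.1 hp2
      refine Finset.mem_filter.2 ⟨Finset.mem_product.2
        ⟨Finset.mem_product.2 ⟨h11, h22⟩, Finset.mem_product.2 ⟨h21, h12'⟩⟩, ?_⟩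
      exact heq
    · intro p hp
      obtain ⟨hmem, heq⟩ := Finset.mem_filter.1 hp
      obtain ⟨hp1, hp2⟩ := Finset.mem_product.1 hmem
      obtain ⟨h11, h12'⟩ := Finset.mem_product.1 hp1
      obtain ⟨h21, h22⟩ := Finset.mem_product.1 hp2
      refine Finset.mem_filter.2 ⟨Finset.mem_product.2
        ⟨Finset.mem_product.2 ⟨h11, h22⟩, Finset.mem_product.2 ⟨h21, h12'⟩⟩, ?_⟩
      exact heq
    · intro p _; rfl
    · intro p _; rfl
  rw [h1, h12, h2]

lemma step1 (hBpos : ∀ b ∈ B, 0 < b) :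
    (A.card * B.card) ^ 2 ≤ (A * B).card * Ebig A B := by
  calc (A.card * B.card) ^ 2 = (∑ x ∈ A * B, rr A B x) ^ 2 := by rw [sum_rr]
    _ ≤ (A * B).card * ∑ x ∈ A * B, rr A B x ^ 2 := sq_sum_le_card_mul_sum_sq
    _ = (A * B).card * Ebig A B := by rw [energy_eq A B hBpos]


lemma class_bound (hBpos : ∀ b ∈ B, 0 < b) (hBA : B.card ≤ A.card) (h2 : 2 ≤ B.card) (k : ℕ) :
    ∑ l ∈ (Lam A B).filter
        (fun l => min (Nat.log 2 (B.card / dd A B l)) (Nat.clog 2 B.card - 1) = k),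
      dd A B l ^ 2 ≤ 4 * ((A + A).card * (B + B).card) := by
  set n := B.card with hn
  set L := Nat.clog 2 n with hLdef
  set S := (A + A).card * (B + B).card with hSdef
  have hL : 0 < L := Nat.clog_pos one_lt_two h2
  have hAne : A.Nonempty := Finset.card_pos.1 (by omega)
  have hBne : B.Nonempty := Finset.card_pos.1 (by omega)
  have hmS1 : A.card ≤ (A + A).card := Finset.card_le_card_add_left hAne
  have hnS2 : n ≤ (B + B).card := Finset.card_le_card_add_left hBne
  have hnn : n * n ≤ S := Nat.mul_le_mul (hBA.trans hmS1) hnS2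
  have hmn : A.card * n ≤ S := Nat.mul_le_mul hmS1 hnS2
  set T := (Lam A B).filter
    (fun l => min (Nat.log 2 (n / dd A B l)) (L - 1) = k) with hTdef
  have hTsub : T ⊆ Lam A B := Finset.filter_subset _ _
  -- basic facts about elements of T
  have hdfacts : ∀ l ∈ T, 0 < dd A B l ∧ dd A B l ≤ n ∧ n / dd A B l ≠ 0 := by
    intro l hl
    have h1 : 0 < dd A B l := dd_pos A B hBpos (hTsub hl)
    have h2' : dd A B l ≤ n := dd_le A B l
    exact ⟨h1, h2', by
      have : 1 ≤ n / dd A B l := (Nat.one_le_div_iff h1).2 h2'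
      omega⟩
  rcases Finset.eq_empty_or_nonempty T with hTe | hT
  · rw [hTe]; simp
  by_cases hklt : k < L - 1
  · -- two-sided dyadic class
    have hbounds : ∀ l ∈ T, 2 ^ k * dd A B l ≤ n ∧ n < 2 ^ (k + 1) * dd A B l := by
      intro l hl
      obtain ⟨hd1, hdn, hnd⟩ := hdfacts l hl
      have hcls : min (Nat.log 2 (n / dd A B l)) (L - 1) = k := (Finset.mem_filter.1 hl).2
      have hlog : Nat.log 2 (n / dd A B l) = k := by
        rcases le_total (Nat.log 2 (n / dd A B l)) (L - 1) with hle | hle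
        · rwa [min_eq_left hle] at hcls
        · rw [min_eq_right hle] at hcls; omega
      constructor
      · calc 2 ^ k * dd A B l ≤ (n / dd A B l) * dd A B l := by
              apply Nat.mul_le_mul_right
              rw [← hlog]
              exact Nat.pow_log_le_self 2 hnd
          _ ≤ n := Nat.div_mul_le_self n _
      · calc n < dd A B l * (n / dd A B l + 1) := Nat.lt_mul_div_succ n hd1
          _ ≤ dd A B l * 2 ^ (k + 1) := by
              apply Nat.mul_le_mul_left
              have := Nat.lt_pow_succ_log_self (b := 2) (by norm_num) (n / dd A B l)
              rw [hlog] at this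
              omega
          _ = 2 ^ (k + 1) * dd A B l := Nat.mul_comm _ _
    set μ := T.min' hT with hμdef
    have hμT : μ ∈ T := T.min'_mem hT
    have hErase : T.erase μ = T.filter (fun l => (T.filter fun m => m < l).Nonempty) := by
      ext l
      constructor
      · intro hl
        obtain ⟨hne, hlT⟩ := Finset.mem_erase.1 hl
        exact Finset.mem_filter.2 ⟨hlT, ⟨μ, Finset.mem_filter.2
          ⟨hμT, lt_of_le_of_ne (T.min'_le l hlT) (Ne.symm hne)⟩⟩⟩
      · intro hl
        obtain ⟨hlT, μ', hμ'⟩ := Finset.mem_filter.1 hl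
        obtain ⟨hμ'T, hμ'l⟩ := Finset.mem_filter.1 hμ'
        refine Finset.mem_erase.2 ⟨?_, hlT⟩
        intro e
        subst e
        exact absurd hμ'l (not_lt.2 (T.min'_le μ' hμ'T))
    set x := 2 ^ k with hxdef
    have hx1 : 1 ≤ x := Nat.one_le_two_pow
    set X := ∑ l ∈ T, dd A B l ^ 2 with hXdef
    set Mer := ∑ l ∈ T.erase μ, dd A B l with hMdef
    have h_a : x * X ≤ n * (dd A B μ + Mer) := by
      have hsum : dd A B μ + Mer = ∑ l ∈ T, dd A B l := Finset.add_sum_erase T _ hμT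
      rw [hsum, hXdef, Finset.mul_sum, Finset.mul_sum]
      apply Finset.sum_le_sum
      intro l hl
      have := (hbounds l hl).1
      calc x * dd A B l ^ 2 = (x * dd A B l) * dd A B l := by ring
        _ ≤ n * dd A B l := Nat.mul_le_mul_right _ this
    have h_c : n * Mer ≤ (x * 2) * Pcons A B T := by
      rw [hMdef, hErase, Pcons, Finset.mul_sum, Finset.mul_sum]
      apply Finset.sum_le_sum
      intro l hl
      have hne : (T.filter fun m => m < l).Nonempty := (Finset.mem_filter.1 hl).2
      have hprdT : prd T l ∈ T := (prd_mem hne).1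
      have hnlt : n < 2 ^ (k + 1) * dd A B (prd T l) := (hbounds _ hprdT).2
      have h2k1 : 2 ^ (k + 1) = x * 2 := by rw [hxdef, pow_succ]
      calc n * dd A B l ≤ ((x * 2) * dd A B (prd T l)) * dd A B l := by
            apply Nat.mul_le_mul_right
            rw [← h2k1]
            omega
        _ = (x * 2) * (dd A B (prd T l) * dd A B l) := by ring
    have h_P : Pcons A B T ≤ S := pcons_le A B hBpos T
    have h_e : x * (n * dd A B μ) ≤ S := by
      calc x * (n * dd A B μ) = n * (x * dd A B μ) := by ring
        _ ≤ n * n := Nat.mul_le_mul_left _ (hbounds μ hμT).1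
        _ ≤ S := hnn
    -- combine
    have hbig : (x * x) * X ≤ (x * x) * (4 * S) := by
      calc (x * x) * X = x * (x * X) := by ring
        _ ≤ x * (n * (dd A B μ + Mer)) := Nat.mul_le_mul_left _ h_a
        _ = x * (n * dd A B μ) + x * (n * Mer) := by ring
        _ ≤ S + x * ((x * 2) * Pcons A B T) :=
            Nat.add_le_add h_e (Nat.mul_le_mul_left _ h_c)
        _ ≤ S + x * ((x * 2) * S) :=
            Nat.add_le_add_left (Nat.mul_le_mul_left _ (Nat.mul_le_mul_left _ h_P)) _
        _ ≤ (x * x) * (4 * S) := by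
            have hxx : 1 ≤ x * x := Nat.one_le_iff_ne_zero.2 (by positivity)
            nlinarith
    exact Nat.le_of_mul_le_mul_left hbig (by positivity)
  · -- top class : dd ≤ 2
    have hkeq : k = L - 1 := by
      obtain ⟨l, hl⟩ := hT
      have hcls : min (Nat.log 2 (n / dd A B l)) (L - 1) = k := (Finset.mem_filter.1 hl).2
      have := min_le_right (Nat.log 2 (n / dd A B l)) (L - 1)
      omega
    have hdd2 : ∀ l ∈ T, dd A B l ≤ 2 := by
      intro l hl
      obtain ⟨hd1, hdn, hnd⟩ := hdfacts l hl
      have hcls : min (Nat.log 2 (n / dd A B l)) (L - 1) = k := (Finset.mem_filter.1 hl).2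
      have hlog : L - 1 ≤ Nat.log 2 (n / dd A B l) := by
        have := min_le_left (Nat.log 2 (n / dd A B l)) (L - 1)
        have := min_le_right (Nat.log 2 (n / dd A B l)) (L - 1)
        rcases le_total (Nat.log 2 (n / dd A B l)) (L - 1) with hle | hle
        · rw [min_eq_left hle] at hcls; omega
        · omega
      have h2L : 2 ^ (L - 1) ≤ n / dd A B l :=
        le_trans (Nat.pow_le_pow_right (by norm_num) hlog) (Nat.pow_log_le_self 2 hnd)
      have hle_n : 2 ^ (L - 1) * dd A B l ≤ n :=
        le_trans (Nat.mul_le_mul_right _ h2L) (Nat.div_mul_le_self n _)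
      have hn2L : n ≤ 2 ^ L := Nat.le_pow_clog one_lt_two n
      have h2L' : 2 ^ L = 2 ^ (L - 1) * 2 := by
        rw [← pow_succ]
        congr 1
        omega
      have : 2 ^ (L - 1) * dd A B l ≤ 2 ^ (L - 1) * 2 := by omega
      exact Nat.le_of_mul_le_mul_left this (Nat.pow_pos (by norm_num))
    calc ∑ l ∈ T, dd A B l ^ 2 ≤ ∑ l ∈ T, 2 * dd A B l := by
          apply Finset.sum_le_sum
          intro l hl
          have := hdd2 l hl
          nlinarith
      _ = 2 * ∑ l ∈ T, dd A B l := by rw [Finset.mul_sum]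
      _ ≤ 2 * ∑ l ∈ Lam A B, dd A B l := by
          apply Nat.mul_le_mul_left
          exact Finset.sum_le_sum_of_subset hTsub
      _ = 2 * (A.card * n) := by rw [sum_dd A B hBpos]
      _ ≤ 2 * S := Nat.mul_le_mul_left _ hmn
      _ ≤ 4 * S := by omega

lemma Ebig_le (hBpos : ∀ b ∈ B, 0 < b) (hBA : B.card ≤ A.card) (h2 : 2 ≤ B.card) :
    Ebig A B ≤ Nat.clog 2 B.card * (4 * ((A + A).card * (B + B).card)) := by
  set L := Nat.clog 2 B.card with hLdef
  have hL : 0 < L := Nat.clog_pos one_lt_two h2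
  have hmaps : ∀ l ∈ Lam A B,
      min (Nat.log 2 (B.card / dd A B l)) (L - 1) ∈ Finset.range L := by
    intro l _
    rw [Finset.mem_range]
    have := min_le_right (Nat.log 2 (B.card / dd A B l)) (L - 1)
    omega
  rw [Ebig, ← Finset.sum_fiberwise_of_maps_to hmaps]
  calc ∑ k ∈ Finset.range L, ∑ l ∈ (Lam A B).filter
        (fun l => min (Nat.log 2 (B.card / dd A B l)) (L - 1) = k), dd A B l ^ 2
      ≤ ∑ _k ∈ Finset.range L, 4 * ((A + A).card * (B + B).card) :=
        Finset.sum_le_sum fun k _ => class_bound A B hBpos hBA h2 k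
    _ = L * (4 * ((A + A).card * (B + B).card)) := by
        rw [Finset.sum_const, Finset.card_range, smul_eq_mul]

end Solymosi

theorem stmt_5 (A B : Finset ℝ) (hA : ∀ a ∈ A, 0 < a) (hB : ∀ b ∈ B, 0 < b)
    (hBA : B.card ≤ A.card) (h2 : 2 ≤ B.card) :
    (A.card : ℝ) ^ 2 * (B.card : ℝ) ^ 2 / ((A * B).card : ℝ) ≤
      4 * (Nat.clog 2 B.card : ℝ) * ((A + A).card : ℝ) * ((B + B).card : ℝ) := by
  have hBne : B.Nonempty := Finset.card_pos.1 (by omega)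
  have hAne : A.Nonempty := Finset.card_pos.1 (by omega)
  have hABne : (A * B).Nonempty := hAne.mul hBne
  have key : (A.card * B.card) ^ 2 ≤
      (A * B).card * (Nat.clog 2 B.card * (4 * ((A + A).card * (B + B).card))) :=
    (Solymosi.step1 A B hB).trans
      (Nat.mul_le_mul_left _ (Solymosi.Ebig_le A B hB hBA h2))
  have hABpos : (0 : ℝ) < ((A * B).card : ℝ) := by
    exact_mod_cast Finset.card_pos.2 hABne
  rw [div_le_iff₀ hABpos]
  have key' : (((#A * #B) ^ 2 : ℕ) : ℝ) ≤
      ((#(A * B) * (Nat.clog 2 #B * (4 * (#(A + A) * #(B + B)))) : ℕ) : ℝ) :=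
    Nat.cast_le.2 key
  push_cast at key'
  nlinarith [key']
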